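/- Let k ≥ 1 and 0 ≤ V_1 ≤ ⋯ ≤ V_k, and for each i let ρ_i be the indicator function of S_{V_i}, where {S_t : t ≥ 0} is an increasing family of Borel subsets of ℝ^d with vol(S_t) = t. Then the affine main term satisfies M^affine_{d,k} = Σ_{(α,β)} M^affine_{α,β} ∏_{i=1}^{m} V_{α_i}, where the sum is over all divisions (α,β) of {1,…,k} and m = #α. -/

import Mathlib

open MeasureTheory Matrix ProbabilityTheory Filter Topology
open scoped BigOperators ENNReal NNReal

noncomputable section

namespace LatticePaper

/-- `SL d` : the group `SL_d(ℝ)`. -/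
abbrev SL (d : ℕ) := Matrix.SpecialLinearGroup (Fin d) ℝ

instance (d : ℕ) : MeasurableSpace (SL d) :=
  MeasurableSpace.comap (fun g (i j : Fin d) => (g : Matrix (Fin d) (Fin d) ℝ) i j)
    inferInstance

/-- The affine unimodular lattice `ℤ^d g + ξ` (row vector convention). -/
def affLat {d : ℕ} (g : SL d) (ξ : Fin d → ℝ) : Set (Fin d → ℝ) :=
  { x | ∃ m : Fin d → ℤ, x = (fun i => (m i : ℝ)) ᵥ* (g : Matrix (Fin d) (Fin d) ℝ) + ξ }

/-- The congruence lattice `(ℤ^d + p/q) g`. -/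
def congLat {d : ℕ} (p : Fin d → ℤ) (q : ℕ) (g : SL d) : Set (Fin d → ℝ) :=
  { x | ∃ m : Fin d → ℤ,
      x = (fun i => (m i : ℝ) + (p i : ℝ) / (q : ℝ)) ᵥ* (g : Matrix (Fin d) (Fin d) ℝ) }

/-- Multiplication in `ASL_d(ℝ)` in the coordinates `(g, ξ)` (row vector convention). -/
def aslMul {d : ℕ} (x y : SL d × (Fin d → ℝ)) : SL d × (Fin d → ℝ) :=
  (x.1 * y.1, x.2 ᵥ* (y.1 : Matrix (Fin d) (Fin d) ℝ) + y.2)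

/-- A real valued function is bounded. -/
def IsBdd {α : Type*} (f : α → ℝ) : Prop := ∃ C, ∀ x, |f x| ≤ C

/-- `μ` represents the unique right-`ASL_d(ℝ)`-invariant Borel probability measure `μ_Y` on the
space `Y = ASL_d(ℤ)\ASL_d(ℝ)` of affine unimodular lattices: it is a probability measure on the
coordinates `(g, ξ)` whose pushforward to the space of affine lattices is right invariant, i.e.
integration of any bounded measurable function of the affine lattice is invariant under the
right translations of `ASL_d(ℝ)`. -/
structure IsHaarY {d : ℕ} (μ : Measure (SL d × (Fin d → ℝ))) : Prop where
  prob : IsProbabilityMeasure μ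
  inv : ∀ (h : SL d × (Fin d → ℝ)) (f : SL d × (Fin d → ℝ) → ℝ),
      Measurable f → IsBdd f →
      (∀ x y, affLat x.1 x.2 = affLat y.1 y.2 → f x = f y) →
      ∫ x, f (aslMul x h) ∂μ = ∫ x, f x ∂μ

/-- `μ` represents the unique right-`SL_d(ℝ)`-invariant Borel probability measure `μ_q` on the
space `Y_{p/q}` of congruence lattices. -/
structure IsHaarCong {d : ℕ} (p : Fin d → ℤ) (q : ℕ) (μ : Measure (SL d)) : Prop where
  prob : IsProbabilityMeasure μ
  inv : ∀ (h : SL d) (f : SL d → ℝ),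
      Measurable f → IsBdd f →
      (∀ x y, congLat p q x = congLat p q y → f x = f y) →
      ∫ x, f (x * h) ∂μ = ∫ x, f x ∂μ

/-- Number of points of `Λ` lying in `S` (as a natural number; junk value `0` if infinite). -/
def latCount {d : ℕ} (S Λ : Set (Fin d → ℝ)) : ℕ := (S ∩ Λ).ncard

/-- `gcd(p, q) = 1` for an integer vector `p` and `q : ℕ`. -/
def vecCoprime {k : ℕ} (l : Fin k → ℤ) (t : ℕ) : Prop :=
  Nat.gcd t (Finset.univ.gcd fun i => (l i).natAbs) = 1

/-- `t_{i-1}`, the previous entry of a tuple of times (with the convention `t_{-1} = 0`). -/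
def prevVal {n : ℕ} (t : Fin n → ℝ) (i : Fin n) : ℝ :=
  if h : (i : ℕ) = 0 then 0
  else t ⟨(i : ℕ) - 1, lt_of_le_of_lt (Nat.sub_le _ _) i.isLt⟩

/-- The joint distribution of `(N^λ(t_1), …, N^λ(t_n))` for a Poisson process of intensity `λ`
on the non-negative real line, at times `t_1 ≤ ⋯ ≤ t_n`: the increments are independent and
Poisson distributed with means `λ(t_i - t_{i-1})`. -/
def poissonFdd (lam : ℝ) {n : ℕ} (t : Fin n → ℝ) : Measure (Fin n → ℝ) :=
  Measure.map (fun (y : Fin n → ℕ) (i : Fin n) => ∑ j : Fin n, if j ≤ i then (y j : ℝ) else 0)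
    (Measure.pi fun i : Fin n => poissonMeasure (Real.toNNReal (lam * (t i - prevVal t i))))

/-- The joint distribution of `(B(t_1), …, B(t_n))` for standard one-dimensional Brownian
motion, at times `t_1 ≤ ⋯ ≤ t_n`: independent Gaussian increments of variance `t_i - t_{i-1}`. -/
def brownianFdd {n : ℕ} (t : Fin n → ℝ) : Measure (Fin n → ℝ) :=
  Measure.map (fun (y : Fin n → ℝ) (i : Fin n) => ∑ j : Fin n, if j ≤ i then y j else 0)
    (Measure.pi fun i : Fin n => gaussianReal 0 (Real.toNNReal (t i - prevVal t i)))

/-- The `k`-fold Siegel transform `F̂(Λ) = ∑_{m_1, …, m_k ∈ Λ} F(m_1, …, m_k)`. -/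
def siegel {d k : ℕ} (F : (Fin k → Fin d → ℝ) → ℝ) (Λ : Set (Fin d → ℝ)) : ℝ :=
  ∑' v : {v : Fin k → Fin d → ℝ // ∀ i, v i ∈ Λ}, F v

/-- The Siegel transform `f̂(Λ) = ∑_{m ∈ Λ} f(m)` of a function on `ℝ^d`. -/
def siegel1 {d : ℕ} (f : (Fin d → ℝ) → ℝ) (Λ : Set (Fin d → ℝ)) : ℝ :=
  ∑' v : Λ, f v

/-- The embedding `Fin (n-1) → Fin n`, `i ↦ i + 1` (used to delete the first row/column). -/
def succEmb (n : ℕ) : Fin (n - 1) → Fin n :=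
  fun i => ⟨i.1 + 1, by have := i.isLt; omega⟩

/-- `D` is one of Rogers' admissible `k × r` integral matrices with parameter `u`, with the
(unique) strictly increasing choice of pivot rows `π`: the entries of `D` have collective
gcd `1`, the rows `π 0 < π 1 < ⋯` of `D` form `u·Id_r`, and all entries of column `j` above
the row `π j` vanish. -/
def AdmissiblePivots {k r : ℕ} (u : ℕ) (D : Matrix (Fin k) (Fin r) ℤ) (π : Fin r → Fin k) :
    Prop :=
  (Finset.univ.gcd (fun pr : Fin k × Fin r => D pr.1 pr.2) = 1) ∧ StrictMono π ∧
  (∀ j j' : Fin r, D (π j) j' = if j' = j then (u : ℤ) else 0) ∧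
  (∀ (j : Fin r) (i : Fin k), i < π j → D i j = 0)

/-- Rogers' admissibility condition: membership in `𝔇^k_{r,u}`. -/
def IsAdmissible {k r : ℕ} (u : ℕ) (D : Matrix (Fin k) (Fin r) ℤ) : Prop :=
  ∃ π : Fin r → Fin k, AdmissiblePivots u D π

/-- `N(D, u)`: the number of `v ∈ {0, 1, …, u-1}^r` with `(1/u) D v ∈ ℤ^k`. -/
def Ncount {k r : ℕ} (u : ℕ) (D : Matrix (Fin k) (Fin r) ℤ) : ℕ :=
  Nat.card {v : Fin r → Fin u // ∀ i : Fin k, (u : ℤ) ∣ ∑ j : Fin r, D i j * ((v j : ℕ) : ℤ)}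

/-- Replace the first column of a matrix by (first column) − (sum of the other columns). -/
def colSub {k m : ℕ} (D' : Matrix (Fin k) (Fin m) ℤ) : Matrix (Fin k) (Fin m) ℤ :=
  fun i j => if (j : ℕ) = 0 then 2 * D' i j - ∑ j' : Fin m, D' i j' else D' i j

/-- The family `𝔄^k_{m,u}`: matrices `D̃'` obtained from some `D ∈ 𝔇^{k-1}_{m-1,u}` by forming
the `k × m` matrix `D'` whose first row is `(u, 0, …, 0)`, whose first column is all `u`'s and
whose remaining block is `D`, and then replacing the first column of `D'` by the first column
minus the sum of all the other columns. -/
def frakA (k m u : ℕ) : Set (Matrix (Fin k) (Fin m) ℤ) :=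
  {E | ∃ (hk : 0 < k) (hm : 0 < m) (D' : Matrix (Fin k) (Fin m) ℤ),
    E = colSub D' ∧
    (∀ j : Fin m, D' ⟨0, hk⟩ j = if (j : ℕ) = 0 then (u : ℤ) else 0) ∧
    (∀ i : Fin k, D' i ⟨0, hm⟩ = (u : ℤ)) ∧
    IsAdmissible u (D'.submatrix (succEmb k) (succEmb m))}

/-- The pivot index set `I_D ⊆ {1, …, k}` of an admissible matrix: the rows that carry the
pivot (`u·Id`) entries; equivalently (for admissible `D` with `u ≥ 1`) the rows `i` having a
nonzero entry in some column whose entries above row `i` all vanish. -/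
def pivotRows {k m : ℕ} (D : Matrix (Fin k) (Fin m) ℤ) : Set (Fin k) :=
  {i | ∃ j : Fin m, D i j ≠ 0 ∧ ∀ i' : Fin k, i' < i → D i' j = 0}

/-- The collection `𝔐^k` (in sizes `k × m`): it consists of `Id_k` (for `m = k`), the all-ones
column (for `m = 1`), and those `D̃' ∈ 𝔄^k_{m,1}` (`2 ≤ m ≤ k-1`) all of whose entries lie in
`{0, 1}` with exactly one nonzero entry in each row. -/
def frakM (k m : ℕ) : Set (Matrix (Fin k) (Fin m) ℤ) :=
  {E | (m = k ∧ E = fun (i : Fin k) (j : Fin m) => if (i : ℕ) = (j : ℕ) then (1 : ℤ) else 0)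
    ∨ (m = 1 ∧ E = fun (_ : Fin k) (_ : Fin m) => (1 : ℤ))
    ∨ (2 ≤ m ∧ m ≤ k - 1 ∧ E ∈ frakA k m 1 ∧ (∀ i j, E i j = 0 ∨ E i j = 1) ∧
        ∀ i : Fin k, ∃! j : Fin m, E i j ≠ 0)}

/-- The main term `M^{affine}_{d,k}` of the joint moment
`𝔼(∏ N_i) = Σ_{D̃' ∈ 𝔐^k} ∫_{(ℝ^d)^m} ∏_{i} ρ_i(row_i(D̃' (y_1; …; y_m)))`, where `ρ_i` is the
indicator function of `S_{V_i}`. -/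
def Maff (d k : ℕ) (S : ℝ → Set (Fin d → ℝ)) (V : Fin k → ℝ) : ℝ :=
  ∑ m ∈ Finset.Icc 1 k, ∑' E : frakM k m,
    ∫ y : Fin m → Fin d → ℝ,
      ∏ i : Fin k,
        Set.indicator (S (V i)) (fun _ => (1 : ℝ))
          (∑ j : Fin m, (((E : Matrix (Fin k) (Fin m) ℤ) i j : ℝ)) • y j)

/-- `M^{affine}_{α,β} = #{D̃' ∈ 𝔐^k : I_{D̃'} = α}` for a division `(α, β)` of `{1, …, k}`. -/
def MaffCount (k : ℕ) (α : Finset (Fin k)) : ℕ :=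
  Nat.card {E : Matrix (Fin k) (Fin α.card) ℤ // E ∈ frakM k α.card ∧ pivotRows E = ↑α}
/-! ### Auxiliary lemmas for the proof of `main_term_affine` -/

lemma frakM_entries01 {k m : ℕ} {E : Matrix (Fin k) (Fin m) ℤ} (hE : E ∈ frakM k m) :
    ∀ i j, E i j = 0 ∨ E i j = 1 := by
  rcases hE with ⟨hm, rfl⟩ | ⟨hm, rfl⟩ | ⟨_, _, _, h01, _⟩
  · intro i j; by_cases h : (i : ℕ) = (j : ℕ) <;> simp [h]
  · intro i j; simp
  · exact h01

lemma frakM_finite (k m : ℕ) : (frakM k m).Finite := by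
  classical
  refine Set.Finite.of_finite_image (f := fun (E : Matrix (Fin k) (Fin m) ℤ) =>
    fun i j => decide (E i j = 1)) (Set.toFinite _) ?_
  intro E1 h1 E2 h2 hEq
  funext i j
  have h := congrFun (congrFun hEq i) j
  rcases frakM_entries01 h1 i j with e1 | e1 <;> rcases frakM_entries01 h2 i j with e2 | e2 <;>
    simp only [e1, e2] at h ⊢ <;> simp_all

lemma frakM_struct {k m : ℕ} (hk : 1 ≤ k) {E : Matrix (Fin k) (Fin m) ℤ}
    (hE : E ∈ frakM k m) :
    ∃ c : Fin k → Fin m, Function.Surjective c ∧ ∀ i j, E i j = if j = c i then 1 else 0 := by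
  classical
  rcases hE with ⟨hm, rfl⟩ | ⟨hm, rfl⟩ | ⟨hm2, hmk, hA, h01, huniq⟩
  · subst hm
    refine ⟨fun i => ⟨i.1, i.isLt⟩, fun j => ⟨⟨j.1, j.isLt⟩, rfl⟩, fun i j => ?_⟩
    by_cases h : (i : ℕ) = (j : ℕ) <;> simp [h, Fin.ext_iff, eq_comm]
  · subst hm
    refine ⟨fun _ => ⟨0, Nat.one_pos⟩, fun j => ⟨⟨0, hk⟩, Subsingleton.elim _ _⟩, fun i j => ?_⟩
    have hj : j = ⟨0, Nat.one_pos⟩ := Subsingleton.elim _ _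
    simp [hj]
  · set c : Fin k → Fin m := fun i => (huniq i).choose with hc
    have hmem : ∀ i, E i (c i) ≠ 0 := fun i => (huniq i).choose_spec.1
    have hun : ∀ i j, E i j ≠ 0 → j = c i := fun i j h => (huniq i).choose_spec.2 j h
    have hval : ∀ i j, E i j = if j = c i then 1 else 0 := by
      intro i j
      by_cases h : j = c i
      · rw [if_pos h]
        rcases h01 i j with h0 | h1
        · rw [h] at h0; exact absurd h0 (hmem i)
        · exact h1
      · rw [if_neg h]
        by_contra hne
        exact h (hun i j hne)
    obtain ⟨hk0, hm0, D', hED, hrow0, hcol0, hadm⟩ := hA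
    obtain ⟨π, hgcd, hmono, hpiv, hzero⟩ := hadm
    refine ⟨c, ?_, hval⟩
    intro j
    by_cases hj : (j : ℕ) = 0
    · refine ⟨⟨0, hk0⟩, (hun _ j ?_).symm⟩
      have hsum : ∑ j' : Fin m, D' ⟨0, hk0⟩ j' = 1 := by
        have hterm : ∀ j' : Fin m, D' ⟨0, hk0⟩ j' = if j' = (⟨0, hm0⟩ : Fin m) then 1 else 0 := by
          intro j'
          rw [hrow0 j']
          by_cases h : (j' : ℕ) = 0 <;> simp [h, Fin.ext_iff]
        simp [hterm]
      have hDq : D' ⟨0, hk0⟩ j = 1 := by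
        rw [hrow0 j]; simp [hj]
      rw [hED]
      show colSub D' ⟨0, hk0⟩ j ≠ 0
      rw [colSub]
      simp only [hj, if_true, hsum, hDq]
      norm_num
    · have hj1 : 1 ≤ (j : ℕ) := Nat.one_le_iff_ne_zero.mpr hj
      have hjlt := j.isLt
      set j0 : Fin (m - 1) := ⟨(j : ℕ) - 1, by omega⟩ with hj0
      have hsucc : succEmb m j0 = j := by
        simp only [succEmb, hj0]
        exact Fin.ext (by simp; omega)
      refine ⟨succEmb k (π j0), (hun _ j ?_).symm⟩
      have hD : D' (succEmb k (π j0)) j = 1 := by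
        have h := hpiv j0 j0
        rw [if_pos rfl] at h
        have h' : D' (succEmb k (π j0)) (succEmb m j0) = 1 := by
          simpa [Matrix.submatrix_apply] using h
        rwa [hsucc] at h'
      rw [hED]
      show colSub D' (succEmb k (π j0)) j ≠ 0
      rw [colSub]
      simp only [hj, if_false, hD]
      norm_num

lemma frakM_pivot {k m : ℕ} (hk : 1 ≤ k) {E : Matrix (Fin k) (Fin m) ℤ}
    (hE : E ∈ frakM k m) :
    ∃ (c : Fin k → Fin m) (p : Fin m → Fin k),
      (∀ i j, E i j = if j = c i then 1 else 0) ∧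
      (∀ j, c (p j) = j) ∧ (∀ i, p (c i) ≤ i) ∧
      pivotRows E = Set.range p := by
  classical
  obtain ⟨c, hsurj, hval⟩ := frakM_struct hk hE
  have hne : ∀ j : Fin m, (Finset.univ.filter fun i => c i = j).Nonempty := by
    intro j; obtain ⟨i, hi⟩ := hsurj j; exact ⟨i, by simp [hi]⟩
  set p : Fin m → Fin k := fun j => (Finset.univ.filter fun i => c i = j).min' (hne j) with hp
  have hcp : ∀ j, c (p j) = j := fun j =>
    (Finset.mem_filter.1 ((Finset.univ.filter fun i => c i = j).min'_mem (hne j))).2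
  have hpc : ∀ i, p (c i) ≤ i := fun i => Finset.min'_le _ i (by simp)
  refine ⟨c, p, hval, hcp, hpc, ?_⟩
  ext i
  simp only [pivotRows, Set.mem_setOf_eq, Set.mem_range]
  constructor
  · rintro ⟨j, hj0, hjz⟩
    have hjc : j = c i := by
      by_contra h; exact hj0 (by rw [hval i j, if_neg h])
    subst hjc
    rcases lt_or_eq_of_le (hpc i) with hlt | heq
    · exfalso
      have h := hjz (p (c i)) hlt
      rw [hval, if_pos (hcp (c i)).symm] at h
      exact one_ne_zero h
    · exact ⟨c i, heq⟩
  · rintro ⟨j, rfl⟩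
    refine ⟨j, ?_, ?_⟩
    · rw [hval, if_pos (hcp j).symm]; exact one_ne_zero
    · intro i' hi'
      have hne' : j ≠ c i' := by
        intro h
        have h2 := hpc i'
        rw [← h] at h2
        exact absurd h2 (not_le.mpr hi')
      rw [hval i' j, if_neg hne']

/-- The pivot rows of a matrix, as a `Finset`. -/
def pivFinset {k m : ℕ} (E : Matrix (Fin k) (Fin m) ℤ) : Finset (Fin k) :=
  (Set.toFinite (pivotRows E)).toFinset

lemma pivFinset_eq_iff {k m : ℕ} (E : Matrix (Fin k) (Fin m) ℤ) (α : Finset (Fin k)) :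
    pivFinset E = α ↔ pivotRows E = ↑α := by
  rw [← Finset.coe_inj, pivFinset, Set.Finite.coe_toFinset]

lemma pivFinset_eq_image {k m : ℕ} {E : Matrix (Fin k) (Fin m) ℤ} {p : Fin m → Fin k}
    (hrange : pivotRows E = Set.range p) :
    pivFinset E = Finset.image p Finset.univ := by
  rw [pivFinset_eq_iff, hrange, Finset.coe_image, Finset.coe_univ, Set.image_univ]

lemma frakM_pivFinset_card {k m : ℕ} (hk : 1 ≤ k) {E : Matrix (Fin k) (Fin m) ℤ}
    (hE : E ∈ frakM k m) : (pivFinset E).card = m := by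
  obtain ⟨c, p, hval, hcp, hpc, hrange⟩ := frakM_pivot hk hE
  rw [pivFinset_eq_image hrange,
    Finset.card_image_of_injective _ (Function.LeftInverse.injective hcp),
    Finset.card_univ, Fintype.card_fin]

lemma frakM_integral {d k m : ℕ} (hk : 1 ≤ k)
    (V : Fin k → ℝ) (hV0 : ∀ i, 0 ≤ V i) (hVmono : Monotone V)
    (S : ℝ → Set (Fin d → ℝ)) (hSmeas : ∀ t : ℝ, 0 ≤ t → MeasurableSet (S t))
    (hSmono : ∀ s t : ℝ, 0 ≤ s → s ≤ t → S s ⊆ S t)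
    (hSvol : ∀ t : ℝ, 0 ≤ t → volume (S t) = ENNReal.ofReal t)
    {E : Matrix (Fin k) (Fin m) ℤ} (hE : E ∈ frakM k m) :
    (∫ y : Fin m → Fin d → ℝ, ∏ i : Fin k,
        Set.indicator (S (V i)) (fun _ => (1 : ℝ)) (∑ j : Fin m, ((E i j : ℝ)) • y j))
      = ∏ a ∈ pivFinset E, V a := by
  classical
  obtain ⟨c, p, hval, hcp, hpc, hrange⟩ := frakM_pivot hk hE
  have hpinj : Function.Injective p := Function.LeftInverse.injective hcp
  have hfun : ∀ y : Fin m → Fin d → ℝ,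
      (∏ i : Fin k, Set.indicator (S (V i)) (fun _ => (1 : ℝ))
        (∑ j : Fin m, ((E i j : ℝ)) • y j))
        = ∏ j : Fin m, Set.indicator (S (V (p j))) (fun _ => (1 : ℝ)) (y j) := by
    intro y
    have h1 : ∀ i, (∑ j : Fin m, ((E i j : ℝ)) • y j) = y (c i) := by
      intro i
      have hterm : ∀ j, ((E i j : ℝ)) • y j = if j = c i then y j else 0 := by
        intro j; rw [hval i j]; by_cases h : j = c i <;> simp [h]
      rw [Finset.sum_congr rfl fun j _ => hterm j, Finset.sum_ite_eq']
      simp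
    simp_rw [h1]
    rw [← Finset.prod_fiberwise Finset.univ c
      (fun i => Set.indicator (S (V i)) (fun _ => (1 : ℝ)) (y (c i)))]
    refine Finset.prod_congr rfl fun j _ => ?_
    by_cases hy : y j ∈ S (V (p j))
    · rw [Set.indicator_of_mem hy]
      apply Finset.prod_eq_one
      intro i hi
      have hci : c i = j := (Finset.mem_filter.1 hi).2
      have hmem : y (c i) ∈ S (V i) := by
        rw [hci]
        refine hSmono _ _ (hV0 _) (hVmono ?_) hy
        rw [← hci]; exact hpc i
      rw [Set.indicator_of_mem hmem]
    · rw [Set.indicator_of_notMem hy]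
      refine Finset.prod_eq_zero (i := p j) (by simp [hcp j]) ?_
      rw [hcp j]
      rw [Set.indicator_of_notMem hy]
  rw [funext hfun, MeasureTheory.volume_pi, MeasureTheory.integral_fintype_prod_eq_prod (ι := Fin m)
    (fun j (x : Fin d → ℝ) => Set.indicator (S (V (p j))) (fun _ => (1 : ℝ)) x)]
  have hint : ∀ j : Fin m,
      (∫ x : Fin d → ℝ, Set.indicator (S (V (p j))) (fun _ => (1 : ℝ)) x) = V (p j) := by
    intro j
    rw [MeasureTheory.integral_indicator_const (1 : ℝ) (hSmeas _ (hV0 _)),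
      MeasureTheory.measureReal_def, hSvol _ (hV0 _), smul_eq_mul, mul_one, ENNReal.toReal_ofReal (hV0 _)]
  rw [Finset.prod_congr rfl fun j _ => hint j, pivFinset_eq_image hrange,
    Finset.prod_image (fun a _ b _ h => hpinj h)]
/-- Lemma `thmsodmainterm`.
Let `k ≥ 1`, `0 ≤ V_1 ≤ ⋯ ≤ V_k`, and let `ρ_i` be the indicator function of `S_{V_i}`, where
`{S_t : t ≥ 0}` is an increasing family of Borel subsets of `ℝ^d` with `vol(S_t) = t`.  Then
`M^{affine}_{d,k} = Σ_{(α,β)} M^{affine}_{α,β} ∏_{i=1}^{m} V_{α_i}`, the sum being over all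
divisions `(α, β)` of `{1, …, k}` (`α ≠ ∅`). -/
theorem main_term_affine
    (d k : ℕ) (hd : 1 ≤ d) (hk : 1 ≤ k)
    (V : Fin k → ℝ) (hV0 : ∀ i, 0 ≤ V i) (hVmono : Monotone V)
    (S : ℝ → Set (Fin d → ℝ))
    (hSmeas : ∀ t : ℝ, 0 ≤ t → MeasurableSet (S t))
    (hSmono : ∀ s t : ℝ, 0 ≤ s → s ≤ t → S s ⊆ S t)
    (hSvol : ∀ t : ℝ, 0 ≤ t → volume (S t) = ENNReal.ofReal t) :
    Maff d k S V =
      ∑ α ∈ Finset.univ.powerset.filter (fun α : Finset (Fin k) => α.Nonempty),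
        (MaffCount k α : ℝ) * ∏ a ∈ α, V a := by
  classical
  have hmaps : ∀ α ∈ Finset.univ.powerset.filter (fun α : Finset (Fin k) => α.Nonempty),
      α.card ∈ Finset.Icc 1 k := by
    intro α hα
    have hne : α.Nonempty := (Finset.mem_filter.1 hα).2
    refine Finset.mem_Icc.2 ⟨Finset.card_pos.2 hne, ?_⟩
    simpa using Finset.card_le_univ α
  rw [← Finset.sum_fiberwise_of_maps_to hmaps (fun α => (MaffCount k α : ℝ) * ∏ a ∈ α, V a)]
  unfold Maff
  refine Finset.sum_congr rfl fun m hm => ?_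
  have hm1 : 1 ≤ m := (Finset.mem_Icc.1 hm).1
  haveI : Fintype (frakM k m) := (frakM_finite k m).fintype
  rw [tsum_fintype]
  have h1 : ∀ E : frakM k m,
      (∫ y : Fin m → Fin d → ℝ, ∏ i : Fin k,
        Set.indicator (S (V i)) (fun _ => (1 : ℝ))
          (∑ j : Fin m, (((E : Matrix (Fin k) (Fin m) ℤ) i j : ℝ)) • y j))
        = ∏ a ∈ pivFinset (E : Matrix (Fin k) (Fin m) ℤ), V a :=
    fun E => frakM_integral hk V hV0 hVmono S hSmeas hSmono hSvol E.2
  simp only [h1]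
  rw [← Finset.sum_fiberwise Finset.univ
    (fun E : frakM k m => pivFinset (E : Matrix (Fin k) (Fin m) ℤ))
    (fun E : frakM k m => ∏ a ∈ pivFinset (E : Matrix (Fin k) (Fin m) ℤ), V a)]
  have h2 : ∀ α : Finset (Fin k),
      (∑ E ∈ Finset.univ.filter
          (fun E : frakM k m => pivFinset (E : Matrix (Fin k) (Fin m) ℤ) = α),
        ∏ a ∈ pivFinset (E : Matrix (Fin k) (Fin m) ℤ), V a)
      = ((Finset.univ.filter
          (fun E : frakM k m => pivFinset (E : Matrix (Fin k) (Fin m) ℤ) = α)).card : ℝ)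
          * ∏ a ∈ α, V a := by
    intro α
    trans (∑ _E ∈ Finset.univ.filter
        (fun E : frakM k m => pivFinset (E : Matrix (Fin k) (Fin m) ℤ) = α), ∏ a ∈ α, V a)
    · exact Finset.sum_congr rfl fun E hE => by rw [(Finset.mem_filter.1 hE).2]
    · rw [Finset.sum_const, nsmul_eq_mul]
  simp only [h2]
  have hzero : ∀ α ∈ (Finset.univ : Finset (Finset (Fin k))),
      α ∉ (Finset.univ.powerset.filter (fun α : Finset (Fin k) => α.Nonempty)).filter
          (fun α => α.card = m) →
      ((Finset.univ.filter (fun E : frakM k m =>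
          pivFinset (E : Matrix (Fin k) (Fin m) ℤ) = α)).card : ℝ) * ∏ a ∈ α, V a = 0 := by
    intro α _ hα
    have hcnt : (Finset.univ.filter (fun E : frakM k m =>
        pivFinset (E : Matrix (Fin k) (Fin m) ℤ) = α)) = ∅ := by
      rw [Finset.filter_eq_empty_iff]
      intro E _ hpe
      apply hα
      have hcard := frakM_pivFinset_card hk E.2
      rw [hpe] at hcard
      refine Finset.mem_filter.2 ⟨Finset.mem_filter.2
        ⟨Finset.mem_powerset.2 (Finset.subset_univ α), Finset.card_pos.1 ?_⟩, hcard⟩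
      omega
    rw [hcnt]
    simp
  rw [← Finset.sum_subset (Finset.subset_univ _) hzero]
  refine Finset.sum_congr rfl fun α hα => ?_
  have hc : α.card = m := (Finset.mem_filter.1 hα).2
  subst hc
  congr 1
  norm_cast
  rw [MaffCount]
  have e : {E : Matrix (Fin k) (Fin α.card) ℤ // E ∈ frakM k α.card ∧ pivotRows E = ↑α}
      ≃ {E : frakM k α.card // pivFinset (E : Matrix (Fin k) (Fin α.card) ℤ) = α} :=
    { toFun := fun x => ⟨⟨x.1, x.2.1⟩, (pivFinset_eq_iff _ _).2 x.2.2⟩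
      invFun := fun x => ⟨x.1.1, x.1.2, (pivFinset_eq_iff _ _).1 x.2⟩
      left_inv := fun _ => rfl
      right_inv := fun _ => rfl }
  rw [Nat.card_congr e, Nat.card_eq_fintype_card, Fintype.card_subtype]

end LatticePaper
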